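/- Let H be a Hopf algebra over a field k with bijective antipode S and τ a Hopf algebra automorphism of H of finite order r, and suppose d_τ = r·exp_τ(H) ≤ 2. Then H is commutative and cocommutative, and moreover τ is either the identity map or the antipode S. -/

import Mathlib

open scoped TensorProduct

noncomputable section

namespace TwistedExponent

variable (k H : Type*) [CommRing k] [Ring H] [HopfAlgebra k H]

/-- The convolution product of two linear endomorphisms of a bialgebra:
`f * g = μ ∘ (f ⊗ g) ∘ Δ`. -/
def conv (f g : H →ₗ[k] H) : H →ₗ[k] H :=
  LinearMap.mul' k H ∘ₗ TensorProduct.map f g ∘ₗ Coalgebra.comul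

/-- The convolution unit `η ∘ ε`, i.e. `h ↦ ε(h)·1`. -/
def convOne : H →ₗ[k] H := Algebra.linearMap k H ∘ₗ Coalgebra.counit

/-- `gamma T m` is the map `Γ_m = μ^m ∘ (Id ⊗ T ⊗ T² ⊗ ⋯ ⊗ T^{m-1}) ∘ Δ^{m-1}`, expressed as
the convolution product `Id * T * T² * ⋯ * T^{m-1}` (with `gamma T 0` the convolution unit). -/
def gamma (T : H →ₗ[k] H) : ℕ → (H →ₗ[k] H)
  | 0 => convOne k H
  | (m + 1) => conv k H (gamma T m) (T ^ m)

/-- The inverse of the antipode, given that the antipode is bijective. -/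
def antipodeInv (hS : Function.Bijective (HopfAlgebra.antipode (R := k) (A := H))) :
    H →ₗ[k] H :=
  (LinearEquiv.ofBijective (HopfAlgebra.antipode (R := k) (A := H)) hS).symm

/-- The map `S⁻² ∘ τ`. -/
def twist (hS : Function.Bijective (HopfAlgebra.antipode (R := k) (A := H)))
    (τ : H →ₗ[k] H) : H →ₗ[k] H :=
  antipodeInv k H hS ∘ₗ antipodeInv k H hS ∘ₗ τ

/-- `f : H → H` has exact (finite) order `r`. -/
def HasOrder (τ : H → H) (r : ℕ) : Prop :=
  0 < r ∧ τ^[r] = id ∧ ∀ s : ℕ, 0 < s → s < r → τ^[s] ≠ id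

end TwistedExponent

open TwistedExponent


namespace StmtAux

open TensorProduct LinearMap Coalgebra

variable {R : Type*} [CommSemiring R]

section Conv

variable {C : Type*} [AddCommMonoid C] [Module R C]
variable {A : Type*} [Semiring A] [Algebra R A]

/-- convolution product -/
def cv [CoalgebraStruct R C] (f g : C →ₗ[R] A) : C →ₗ[R] A :=
  LinearMap.mul' R A ∘ₗ TensorProduct.map f g ∘ₗ Coalgebra.comul

/-- convolution unit -/
def cu [CoalgebraStruct R C] : C →ₗ[R] A :=
  Algebra.linearMap R A ∘ₗ Coalgebra.counit

lemma cv_repr [CoalgebraStruct R C] (f g : C →ₗ[R] A) {x : C} {ι : Type*} (r : Coalgebra.Repr R x ι) :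
    cv f g x = ∑ i ∈ r.index, f (r.left i) * g (r.right i) := by
  simp only [cv, LinearMap.comp_apply, ← r.eq, map_sum, TensorProduct.map_tmul,
    LinearMap.mul'_apply]

variable [Coalgebra R C]

lemma cv_assoc (f g h : C →ₗ[R] A) : cv (cv f g) h = cv f (cv g h) := by
  ext x
  set r := Coalgebra.Repr.arbitrary R x with hr
  set r1 : ∀ i : C × C, Coalgebra.Repr R (r.left i) (C × C) :=
    fun i => Coalgebra.Repr.arbitrary R _ with hr1
  set r2 : ∀ i : C × C, Coalgebra.Repr R (r.right i) (C × C) :=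
    fun i => Coalgebra.Repr.arbitrary R _ with hr2
  have key := congrArg (LinearMap.mul' R A ∘ₗ (LinearMap.mul' R A).lTensor A ∘ₗ
      TensorProduct.map f (TensorProduct.map g h)) (Coalgebra.sum_tmul_tmul_eq r r1 r2)
  simp only [map_sum, LinearMap.comp_apply, TensorProduct.map_tmul, LinearMap.lTensor_tmul,
    LinearMap.mul'_apply] at key
  rw [cv_repr (cv f g) h r, cv_repr f (cv g h) r]
  calc ∑ i ∈ r.index, cv f g (r.left i) * h (r.right i)
      = ∑ i ∈ r.index, ∑ j ∈ (r1 i).index,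
          f ((r1 i).left j) * (g ((r1 i).right j) * h (r.right i)) := by
        refine Finset.sum_congr rfl fun i _ => ?_
        rw [cv_repr f g (r1 i), Finset.sum_mul]
        exact Finset.sum_congr rfl fun j _ => mul_assoc _ _ _
    _ = ∑ i ∈ r.index, ∑ j ∈ (r2 i).index,
          f (r.left i) * (g ((r2 i).left j) * h ((r2 i).right j)) := key
    _ = ∑ i ∈ r.index, f (r.left i) * cv g h (r.right i) := by
        refine Finset.sum_congr rfl fun i _ => ?_
        rw [cv_repr g h (r2 i), Finset.mul_sum]

lemma cv_one_left (f : C →ₗ[R] A) : cv cu f = f := by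
  ext x
  have key := congrArg (f ∘ₗ (TensorProduct.lid R C).toLinearMap)
    (Coalgebra.sum_counit_tmul_eq (Coalgebra.Repr.arbitrary R x))
  simp only [map_sum, LinearMap.comp_apply, LinearEquiv.coe_coe, TensorProduct.lid_tmul,
    one_smul, map_smul] at key
  rw [cv_repr cu f (Coalgebra.Repr.arbitrary R x), ← key]
  refine Finset.sum_congr rfl fun i _ => ?_
  simp only [cu, LinearMap.comp_apply, Algebra.linearMap_apply]
  rw [← Algebra.smul_def]

lemma cv_one_right (f : C →ₗ[R] A) : cv f cu = f := by
  ext x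
  have key := congrArg (f ∘ₗ (TensorProduct.rid R C).toLinearMap)
    (Coalgebra.sum_tmul_counit_eq (Coalgebra.Repr.arbitrary R x))
  simp only [map_sum, LinearMap.comp_apply, LinearEquiv.coe_coe, TensorProduct.rid_tmul,
    one_smul, map_smul] at key
  rw [cv_repr f cu (Coalgebra.Repr.arbitrary R x), ← key]
  refine Finset.sum_congr rfl fun i _ => ?_
  simp only [cu, LinearMap.comp_apply, Algebra.linearMap_apply]
  rw [← Algebra.commutes, ← Algebra.smul_def]

lemma cv_unique {f g h : C →ₗ[R] A} (h1 : cv f g = cu) (h2 : cv g h = cu) : f = h := by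
  have : cv f (cv g h) = cv (cv f g) h := (cv_assoc f g h).symm
  rwa [h1, h2, cv_one_right, cv_one_left] at this

end Conv



section TensorCoalg

variable {M N : Type*} [AddCommMonoid M] [AddCommMonoid N] [Module R M] [Module R N]
variable [Coalgebra R M] [Coalgebra R N]

lemma sum4_comm {α β γ δ X : Type*} [AddCommMonoid X] (I : Finset α) (J : α → Finset β)
    (S : Finset γ) (T : γ → Finset δ) (f : α → β → γ → δ → X) :
    ∑ i ∈ I, ∑ j ∈ J i, ∑ s ∈ S, ∑ t ∈ T s, f i j s t
      = ∑ s ∈ S, ∑ t ∈ T s, ∑ i ∈ I, ∑ j ∈ J i, f i j s t :=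
  calc ∑ i ∈ I, ∑ j ∈ J i, ∑ s ∈ S, ∑ t ∈ T s, f i j s t
      = ∑ i ∈ I, ∑ s ∈ S, ∑ j ∈ J i, ∑ t ∈ T s, f i j s t :=
        Finset.sum_congr rfl fun i _ => Finset.sum_comm
    _ = ∑ s ∈ S, ∑ i ∈ I, ∑ j ∈ J i, ∑ t ∈ T s, f i j s t := Finset.sum_comm
    _ = ∑ s ∈ S, ∑ i ∈ I, ∑ t ∈ T s, ∑ j ∈ J i, f i j s t :=
        Finset.sum_congr rfl fun s _ => Finset.sum_congr rfl fun i _ => Finset.sum_comm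
    _ = ∑ s ∈ S, ∑ t ∈ T s, ∑ i ∈ I, ∑ j ∈ J i, f i j s t :=
        Finset.sum_congr rfl fun s _ => Finset.sum_comm

lemma comul_tmul (a : M) (b : N) {ι κ : Type*} (ra : Coalgebra.Repr R a ι)
    (rb : Coalgebra.Repr R b κ) :
    Coalgebra.comul (R := R) (a ⊗ₜ[R] b) =
      ∑ i ∈ ra.index, ∑ s ∈ rb.index,
        (ra.left i ⊗ₜ[R] rb.left s) ⊗ₜ[R] (ra.right i ⊗ₜ[R] rb.right s) := by
  rw [TensorProduct.comul_def]
  simp only [LinearMap.comp_apply, TensorProduct.AlgebraTensorModule.map_tmul, LinearEquiv.coe_coe]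
  rw [← ra.eq, ← rb.eq]
  simp only [TensorProduct.sum_tmul, TensorProduct.tmul_sum, map_sum,
    TensorProduct.AlgebraTensorModule.tensorTensorTensorComm_tmul]
  exact Finset.sum_comm

/-- The tensor product coalgebra, universe polymorphic. -/
def tensorCoalgebra : Coalgebra R (M ⊗[R] N) where
  __ := (inferInstance : CoalgebraStruct R (M ⊗[R] N))
  coassoc := by
    apply TensorProduct.ext'
    intro a b
    set ra := Coalgebra.Repr.arbitrary R a
    set rb := Coalgebra.Repr.arbitrary R b
    set ra1 : ∀ i : M × M, Coalgebra.Repr R (ra.left i) (M × M) :=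
      fun i => Coalgebra.Repr.arbitrary R _
    set ra2 : ∀ i : M × M, Coalgebra.Repr R (ra.right i) (M × M) :=
      fun i => Coalgebra.Repr.arbitrary R _
    set rb1 : ∀ s : N × N, Coalgebra.Repr R (rb.left s) (N × N) :=
      fun s => Coalgebra.Repr.arbitrary R _
    set rb2 : ∀ s : N × N, Coalgebra.Repr R (rb.right s) (N × N) :=
      fun s => Coalgebra.Repr.arbitrary R _
    have Ka := Coalgebra.sum_tmul_tmul_eq ra ra1 ra2
    have Kb := Coalgebra.sum_tmul_tmul_eq rb rb1 rb2
    -- the interleaving map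
    set Θ : (M ⊗[R] (M ⊗[R] M)) ⊗[R] (N ⊗[R] (N ⊗[R] N)) →ₗ[R]
        (M ⊗[R] N) ⊗[R] ((M ⊗[R] N) ⊗[R] (M ⊗[R] N)) :=
      (TensorProduct.tensorTensorTensorComm R M M N N).toLinearMap.lTensor (M ⊗[R] N) ∘ₗ
        (TensorProduct.tensorTensorTensorComm R M (M ⊗[R] M) N (N ⊗[R] N)).toLinearMap with hΘ
    have key := congrArg Θ (congrArg₂ (· ⊗ₜ[R] ·) Ka Kb)
    simp only [hΘ, TensorProduct.sum_tmul, TensorProduct.tmul_sum, map_sum,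
      LinearMap.comp_apply, LinearEquiv.coe_coe, TensorProduct.tensorTensorTensorComm_tmul,
      LinearMap.lTensor_tmul] at key
    calc (TensorProduct.assoc R _ _ _)
          ((Coalgebra.comul (R := R)).rTensor _ (Coalgebra.comul (a ⊗ₜ[R] b)))
        = ∑ i ∈ ra.index, ∑ s ∈ rb.index, ∑ j ∈ (ra1 i).index, ∑ t ∈ (rb1 s).index,
            ((ra1 i).left j ⊗ₜ[R] (rb1 s).left t) ⊗ₜ[R]
              (((ra1 i).right j ⊗ₜ[R] (rb1 s).right t) ⊗ₜ[R] (ra.right i ⊗ₜ[R] rb.right s)) := by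
          rw [comul_tmul a b ra rb]
          simp only [map_sum, LinearMap.rTensor_tmul]
          refine Finset.sum_congr rfl fun i _ => Finset.sum_congr rfl fun s _ => ?_
          rw [comul_tmul _ _ (ra1 i) (rb1 s)]
          simp only [TensorProduct.sum_tmul, map_sum, TensorProduct.assoc_tmul]
      _ = ∑ i ∈ ra.index, ∑ s ∈ rb.index, ∑ j ∈ (ra2 i).index, ∑ t ∈ (rb2 s).index,
            (ra.left i ⊗ₜ[R] rb.left s) ⊗ₜ[R]
              (((ra2 i).left j ⊗ₜ[R] (rb2 s).left t) ⊗ₜ[R]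
                ((ra2 i).right j ⊗ₜ[R] (rb2 s).right t)) := by
          have lhs_eq : ∀ i ∈ ra.index, (∑ s ∈ rb.index, ∑ j ∈ (ra1 i).index,
              ∑ t ∈ (rb1 s).index, ((ra1 i).left j ⊗ₜ[R] (rb1 s).left t) ⊗ₜ[R]
              (((ra1 i).right j ⊗ₜ[R] (rb1 s).right t) ⊗ₜ[R] (ra.right i ⊗ₜ[R] rb.right s)))
              = ∑ j ∈ (ra1 i).index, ∑ s ∈ rb.index, ∑ t ∈ (rb1 s).index,
              ((ra1 i).left j ⊗ₜ[R] (rb1 s).left t) ⊗ₜ[R]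
              (((ra1 i).right j ⊗ₜ[R] (rb1 s).right t) ⊗ₜ[R] (ra.right i ⊗ₜ[R] rb.right s)) :=
            fun i _ => Finset.sum_comm
          have rhs_eq : ∀ i ∈ ra.index, (∑ s ∈ rb.index, ∑ j ∈ (ra2 i).index,
              ∑ t ∈ (rb2 s).index, (ra.left i ⊗ₜ[R] rb.left s) ⊗ₜ[R]
              (((ra2 i).left j ⊗ₜ[R] (rb2 s).left t) ⊗ₜ[R]
                ((ra2 i).right j ⊗ₜ[R] (rb2 s).right t)))
              = ∑ j ∈ (ra2 i).index, ∑ s ∈ rb.index, ∑ t ∈ (rb2 s).index,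
              (ra.left i ⊗ₜ[R] rb.left s) ⊗ₜ[R]
              (((ra2 i).left j ⊗ₜ[R] (rb2 s).left t) ⊗ₜ[R]
                ((ra2 i).right j ⊗ₜ[R] (rb2 s).right t)) :=
            fun i _ => Finset.sum_comm
          rw [Finset.sum_congr rfl lhs_eq, Finset.sum_congr rfl rhs_eq]
          exact (sum4_comm _ _ _ _ _).trans (key.trans (sum4_comm _ _ _ _ _).symm)
      _ = (Coalgebra.comul (R := R)).lTensor _ (Coalgebra.comul (a ⊗ₜ[R] b)) := by
          rw [comul_tmul a b ra rb]
          simp only [map_sum, LinearMap.lTensor_tmul]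
          refine Finset.sum_congr rfl fun i _ => Finset.sum_congr rfl fun s _ => ?_
          rw [comul_tmul _ _ (ra2 i) (rb2 s)]
          simp only [TensorProduct.tmul_sum, map_sum]
  rTensor_counit_comp_comul := by
    apply TensorProduct.ext'
    intro a b
    set ra := Coalgebra.Repr.arbitrary R a
    set rb := Coalgebra.Repr.arbitrary R b
    have Ka := Coalgebra.sum_counit_tmul_eq ra
    have Kb := Coalgebra.sum_counit_tmul_eq rb
    set Φ : (R ⊗[R] M) ⊗[R] (R ⊗[R] N) →ₗ[R] R ⊗[R] (M ⊗[R] N) :=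
      (LinearMap.mul' R R).rTensor (M ⊗[R] N) ∘ₗ
        (TensorProduct.tensorTensorTensorComm R R M R N).toLinearMap with hΦ
    have key := congrArg Φ (congrArg₂ (· ⊗ₜ[R] ·) Ka Kb)
    simp only [hΦ, TensorProduct.sum_tmul, TensorProduct.tmul_sum, map_sum,
      LinearMap.comp_apply, LinearEquiv.coe_coe, TensorProduct.tensorTensorTensorComm_tmul,
      LinearMap.rTensor_tmul, LinearMap.mul'_apply, one_mul] at key
    rw [LinearMap.comp_apply, comul_tmul a b ra rb]
    simp only [map_sum, LinearMap.rTensor_tmul, TensorProduct.counit_tmul, smul_eq_mul, mul_comm,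
      LinearMap.comp_apply, TensorProduct.map_tmul, LinearMap.mul'_apply]
    exact Finset.sum_comm.trans key
  lTensor_counit_comp_comul := by
    apply TensorProduct.ext'
    intro a b
    set ra := Coalgebra.Repr.arbitrary R a
    set rb := Coalgebra.Repr.arbitrary R b
    have Ka := Coalgebra.sum_tmul_counit_eq ra
    have Kb := Coalgebra.sum_tmul_counit_eq rb
    set Φ : (M ⊗[R] R) ⊗[R] (N ⊗[R] R) →ₗ[R] (M ⊗[R] N) ⊗[R] R :=
      (LinearMap.mul' R R).lTensor (M ⊗[R] N) ∘ₗ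
        (TensorProduct.tensorTensorTensorComm R M R N R).toLinearMap with hΦ
    have key := congrArg Φ (congrArg₂ (· ⊗ₜ[R] ·) Ka Kb)
    simp only [hΦ, TensorProduct.sum_tmul, TensorProduct.tmul_sum, map_sum,
      LinearMap.comp_apply, LinearEquiv.coe_coe, TensorProduct.tensorTensorTensorComm_tmul,
      LinearMap.lTensor_tmul, LinearMap.mul'_apply, one_mul] at key
    rw [LinearMap.comp_apply, comul_tmul a b ra rb]
    simp only [map_sum, LinearMap.lTensor_tmul, TensorProduct.counit_tmul, smul_eq_mul, mul_comm,
      LinearMap.comp_apply, TensorProduct.map_tmul, LinearMap.mul'_apply]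
    exact Finset.sum_comm.trans key

end TensorCoalg


section TensorConv
variable {R : Type*} [CommSemiring R]
variable {M N : Type*} [AddCommMonoid M] [AddCommMonoid N] [Module R M] [Module R N]
variable [Coalgebra R M] [Coalgebra R N]
variable {A : Type*} [Semiring A] [Algebra R A]

lemma cv_tmul (f g : M ⊗[R] N →ₗ[R] A) (a : M) (b : N)
    {ι κ : Type*} (ra : Coalgebra.Repr R a ι) (rb : Coalgebra.Repr R b κ) :
    cv f g (a ⊗ₜ[R] b) = ∑ i ∈ ra.index, ∑ s ∈ rb.index,
      f (ra.left i ⊗ₜ[R] rb.left s) * g (ra.right i ⊗ₜ[R] rb.right s) := by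
  simp only [cv, LinearMap.comp_apply, comul_tmul a b ra rb, map_sum,
    TensorProduct.map_tmul, LinearMap.mul'_apply]

lemma cu_tmul (a : M) (b : N) :
    (cu : M ⊗[R] N →ₗ[R] A) (a ⊗ₜ[R] b) =
      algebraMap R A (Coalgebra.counit (R := R) a * Coalgebra.counit (R := R) b) := by
  simp only [cu, LinearMap.comp_apply, TensorProduct.counit_tmul, smul_eq_mul,
    TensorProduct.map_tmul, LinearMap.mul'_apply, Algebra.linearMap_apply]
  rw [mul_comm]

end TensorConv

section Hopf
variable {k H : Type*} [CommRing k] [Ring H] [HopfAlgebra k H]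

attribute [local instance] tensorCoalgebra

lemma cv_antipode_id :
    cv (HopfAlgebra.antipode (R := k) (A := H)) LinearMap.id = cu :=
  HopfAlgebra.mul_antipode_rTensor_comul

lemma cv_id_antipode :
    cv LinearMap.id (HopfAlgebra.antipode (R := k) (A := H)) = cu :=
  HopfAlgebra.mul_antipode_lTensor_comul

lemma antipode_one : HopfAlgebra.antipode (R := k) (1 : H) = 1 := by
  have h := HopfAlgebra.mul_antipode_rTensor_comul_apply (R := k) (A := H) 1
  simpa [Bialgebra.comul_one, Algebra.TensorProduct.one_def] using h

/-- a representation of a product -/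
def Coalgebra.Repr.mul {a b : H} (ra : Coalgebra.Repr k a (H × H))
    (rb : Coalgebra.Repr k b (H × H)) :
    Coalgebra.Repr k (a * b) ((H × H) × (H × H)) where
  index := ra.index ×ˢ rb.index
  left := fun p => ra.left p.1 * rb.left p.2
  right := fun p => ra.right p.1 * rb.right p.2
  eq := by
    rw [Bialgebra.comul_mul, ← ra.eq, ← rb.eq, Finset.sum_mul_sum, Finset.sum_product]
    simp only [Algebra.TensorProduct.tmul_mul_tmul]

variable (k H) in
def Fm : H ⊗[k] H →ₗ[k] H := HopfAlgebra.antipode k ∘ₗ LinearMap.mul' k H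
variable (k H) in
def Gm : H ⊗[k] H →ₗ[k] H := LinearMap.mul' k H
variable (k H) in
def Km : H ⊗[k] H →ₗ[k] H :=
  LinearMap.mul' k H ∘ₗ
    TensorProduct.map (HopfAlgebra.antipode k) (HopfAlgebra.antipode k) ∘ₗ
      (TensorProduct.comm k H H).toLinearMap

@[simp] lemma Fm_tmul (x y : H) :
    Fm k H (x ⊗ₜ[k] y) = HopfAlgebra.antipode (R := k) (x * y) := by
  simp [Fm]
@[simp] lemma Gm_tmul (x y : H) : Gm k H (x ⊗ₜ[k] y) = x * y := by
  simp [Gm]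
@[simp] lemma Km_tmul (x y : H) :
    Km k H (x ⊗ₜ[k] y) =
      HopfAlgebra.antipode (R := k) y * HopfAlgebra.antipode (R := k) x := by
  simp [Km]

lemma antipode_mul (a b : H) :
    HopfAlgebra.antipode (R := k) (a * b) =
      HopfAlgebra.antipode (R := k) b * HopfAlgebra.antipode (R := k) (a : H) := by
  have h1 : cv (Fm k H) (Gm k H) = cu := by
    apply TensorProduct.ext'
    intro x y
    set rx := Coalgebra.Repr.arbitrary k x
    set ry := Coalgebra.Repr.arbitrary k y
    rw [cv_tmul (Fm k H) (Gm k H) x y rx ry, cu_tmul]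
    have key := HopfAlgebra.sum_antipode_mul_eq_algebraMap_counit (R := k) (Coalgebra.Repr.mul rx ry)
    simp only [Coalgebra.Repr.mul] at key
    rw [Finset.sum_product] at key
    simp only [Fm_tmul, Gm_tmul]
    rw [key, Bialgebra.counit_mul]
  have h2 : cv (Gm k H) (Km k H) = cu := by
    apply TensorProduct.ext'
    intro x y
    set rx := Coalgebra.Repr.arbitrary k x
    set ry := Coalgebra.Repr.arbitrary k y
    rw [cv_tmul (Gm k H) (Km k H) x y rx ry, cu_tmul]
    have step : ∀ i ∈ rx.index,
        (∑ s ∈ ry.index, Gm k H (rx.left i ⊗ₜ[k] ry.left s) * Km k H (rx.right i ⊗ₜ[k] ry.right s))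
          = Coalgebra.counit (R := k) y •
              (rx.left i * HopfAlgebra.antipode (R := k) (rx.right i)) := by
      intro i _
      have e1 : ∀ s ∈ ry.index,
          Gm k H (rx.left i ⊗ₜ[k] ry.left s) * Km k H (rx.right i ⊗ₜ[k] ry.right s)
            = rx.left i * ((ry.left s * HopfAlgebra.antipode (R := k) (ry.right s)) *
                HopfAlgebra.antipode (R := k) (rx.right i)) := by
        intro s _
        rw [Gm_tmul, Km_tmul, mul_assoc, ← mul_assoc (ry.left s)]
      rw [Finset.sum_congr rfl e1, ← Finset.mul_sum, ← Finset.sum_mul,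
        HopfAlgebra.sum_mul_antipode_eq_algebraMap_counit ry, ← Algebra.smul_def, mul_smul_comm]
    rw [Finset.sum_congr rfl step, ← Finset.smul_sum, HopfAlgebra.sum_mul_antipode_eq_algebraMap_counit rx,
      Algebra.smul_def, ← map_mul, mul_comm]
  have hFK : Fm k H = Km k H := cv_unique h1 h2
  have := LinearMap.congr_fun hFK (a ⊗ₜ[k] b)
  simpa using this


lemma inner_collapse (a m : H) {ι : Type*} (rm : Coalgebra.Repr k m ι) :
    ∑ j ∈ rm.index,
      (HopfAlgebra.antipode (R := k) (rm.left j) ⊗ₜ[k] HopfAlgebra.antipode (R := k) a) *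
        Coalgebra.comul (R := k) (rm.right j)
      = (1 : H) ⊗ₜ[k] (HopfAlgebra.antipode (R := k) a * m) := by
  set S : H →ₗ[k] H := HopfAlgebra.antipode (R := k) (A := H) with hSdef
  set L : H ⊗[k] (H ⊗[k] H) →ₗ[k] H ⊗[k] H :=
    TensorProduct.map (LinearMap.mul' k H ∘ₗ LinearMap.rTensor H S) (LinearMap.mulLeft k (S a)) ∘ₗ
      (TensorProduct.assoc k H H H).symm.toLinearMap with hL
  have hterm : ∀ j ∈ rm.index,
      (S (rm.left j) ⊗ₜ[k] S a) * Coalgebra.comul (R := k) (rm.right j)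
        = L (rm.left j ⊗ₜ[k] Coalgebra.comul (R := k) (rm.right j)) := by
    intro j _
    generalize Coalgebra.comul (R := k) (rm.right j) = z
    induction z using TensorProduct.induction_on with
    | zero => simp only [TensorProduct.tmul_zero, mul_zero, map_zero]
    | tmul p q =>
        simp [hL, Algebra.TensorProduct.tmul_mul_tmul]
    | add u v hu hv => simp only [TensorProduct.tmul_add, map_add, mul_add, hu, hv]
  rw [Finset.sum_congr rfl hterm, ← map_sum]
  have h0 : (∑ j ∈ rm.index, rm.left j ⊗ₜ[k] Coalgebra.comul (R := k) (rm.right j))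
      = (Coalgebra.comul (R := k) (A := H)).lTensor H (Coalgebra.comul (R := k) m) := by
    rw [← rm.eq, map_sum]
    simp only [LinearMap.lTensor_tmul]
  rw [h0, ← Coalgebra.coassoc_apply, hL]
  rw [LinearMap.comp_apply, LinearEquiv.coe_coe, LinearEquiv.symm_apply_apply,
    ← LinearMap.comp_apply, LinearMap.map_comp_rTensor, LinearMap.comp_assoc,
    hSdef, HopfAlgebra.mul_antipode_rTensor_comul, ← LinearMap.map_comp_rTensor,
    LinearMap.comp_apply, Coalgebra.rTensor_counit_comul]
  simp


variable (k H) in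
def Fc : H →ₗ[k] H ⊗[k] H :=
  Coalgebra.comul ∘ₗ HopfAlgebra.antipode (R := k) (A := H)
variable (k H) in
def Gc : H →ₗ[k] H ⊗[k] H := Coalgebra.comul
variable (k H) in
def Kc : H →ₗ[k] H ⊗[k] H :=
  (TensorProduct.comm k H H).toLinearMap ∘ₗ
    TensorProduct.map (HopfAlgebra.antipode (R := k) (A := H))
      (HopfAlgebra.antipode (R := k) (A := H)) ∘ₗ Coalgebra.comul

lemma antipode_comul (h : H) :
    Coalgebra.comul (R := k) (HopfAlgebra.antipode (R := k) h)
      = (TensorProduct.comm k H H)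
          (TensorProduct.map (HopfAlgebra.antipode (R := k) (A := H))
            (HopfAlgebra.antipode (R := k) (A := H)) (Coalgebra.comul (R := k) h)) := by
  have h1 : cv (Gc k H) (Fc k H) = cu := by
    ext x
    set r := Coalgebra.Repr.arbitrary k x
    rw [cv_repr (Gc k H) (Fc k H) r]
    have e1 : ∀ i ∈ r.index, Gc k H (r.left i) * Fc k H (r.right i)
        = Coalgebra.comul (R := k)
            (r.left i * HopfAlgebra.antipode (R := k) (r.right i)) := by
      intro i _
      rw [Bialgebra.comul_mul]
      rfl
    rw [Finset.sum_congr rfl e1, ← map_sum, HopfAlgebra.sum_mul_antipode_eq_algebraMap_counit r,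
      Bialgebra.comul_algebraMap]
    simp [cu]
  have h2 : cv (Kc k H) (Gc k H) = cu := by
    ext x
    set r := Coalgebra.Repr.arbitrary k x with hr
    set r1 : ∀ i : H × H, Coalgebra.Repr k (r.left i) (H × H) :=
      fun i => Coalgebra.Repr.arbitrary k _ with hr1
    set r2 : ∀ i : H × H, Coalgebra.Repr k (r.right i) (H × H) :=
      fun i => Coalgebra.Repr.arbitrary k _ with hr2
    rw [cv_repr (Kc k H) (Gc k H) r]
    have e1 : ∀ i ∈ r.index, Kc k H (r.left i) * Gc k H (r.right i)
        = ∑ j ∈ (r1 i).index,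
            (HopfAlgebra.antipode (R := k) ((r1 i).right j) ⊗ₜ[k]
              HopfAlgebra.antipode (R := k) ((r1 i).left j)) *
              Coalgebra.comul (R := k) (r.right i) := by
      intro i _
      have : Kc k H (r.left i) = ∑ j ∈ (r1 i).index,
          HopfAlgebra.antipode (R := k) ((r1 i).right j) ⊗ₜ[k]
            HopfAlgebra.antipode (R := k) ((r1 i).left j) := by
        simp only [Kc, LinearMap.comp_apply, ← (r1 i).eq, map_sum, TensorProduct.map_tmul,
          LinearEquiv.coe_coe, TensorProduct.comm_tmul]
      rw [this, Finset.sum_mul]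
      rfl
    rw [Finset.sum_congr rfl e1]
    set T : H ⊗[k] (H ⊗[k] H) →ₗ[k] H ⊗[k] H :=
      LinearMap.mul' k (H ⊗[k] H) ∘ₗ
        TensorProduct.map
          ((TensorProduct.comm k H H).toLinearMap ∘ₗ
            TensorProduct.map (HopfAlgebra.antipode (R := k) (A := H))
              (HopfAlgebra.antipode (R := k) (A := H)))
          (Coalgebra.comul (R := k) (A := H)) ∘ₗ
          (TensorProduct.assoc k H H H).symm.toLinearMap with hT
    have key := congrArg T (Coalgebra.sum_tmul_tmul_eq r r1 r2)
    simp only [hT, map_sum, LinearMap.comp_apply, LinearEquiv.coe_coe,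
      TensorProduct.assoc_symm_tmul, TensorProduct.map_tmul, TensorProduct.comm_tmul,
      LinearMap.mul'_apply] at key
    rw [key, Finset.sum_congr rfl
      (fun i _ => inner_collapse (r.left i) (r.right i) (r2 i)),
      ← TensorProduct.tmul_sum, HopfAlgebra.sum_antipode_mul_eq_algebraMap_counit r]
    simp [cu, Algebra.TensorProduct.algebraMap_apply, Algebra.algebraMap_eq_smul_one,
      TensorProduct.smul_tmul, Algebra.TensorProduct.one_def]
  have hKF : Kc k H = Fc k H := cv_unique h2 h1
  have := LinearMap.congr_fun hKF h
  simp only [Kc, Fc, LinearMap.comp_apply, LinearEquiv.coe_coe] at this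
  exact this.symm


lemma comm_comm (z : H ⊗[k] H) :
    (TensorProduct.comm k H H) ((TensorProduct.comm k H H) z) = z := by
  induction z using TensorProduct.induction_on with
  | zero => simp
  | tmul p q => simp
  | add u v hu hv => rw [map_add, map_add, hu, hv]

lemma mapSS_comm (z : H ⊗[k] H) :
    TensorProduct.map (HopfAlgebra.antipode (R := k) (A := H))
        (HopfAlgebra.antipode (R := k) (A := H)) ((TensorProduct.comm k H H) z)
      = (TensorProduct.comm k H H)
          (TensorProduct.map (HopfAlgebra.antipode (R := k) (A := H))
            (HopfAlgebra.antipode (R := k) (A := H)) z) := by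
  induction z using TensorProduct.induction_on with
  | zero => simp
  | tmul p q => simp
  | add u v hu hv => rw [map_add, map_add, hu, map_add, map_add, hv]

lemma antipode_sq_of_comm (hcomm : ∀ x y : H, x * y = y * x) (x : H) :
    HopfAlgebra.antipode (R := k) (HopfAlgebra.antipode (R := k) x) = x := by
  have h3 : cv (HopfAlgebra.antipode (R := k) (A := H) ∘ₗ HopfAlgebra.antipode (R := k) (A := H))
      (HopfAlgebra.antipode (R := k) (A := H)) = cu := by
    ext h
    set r := Coalgebra.Repr.arbitrary k h
    rw [cv_repr _ _ r]
    have e1 : ∀ i ∈ r.index,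
        (HopfAlgebra.antipode (R := k) (A := H) ∘ₗ HopfAlgebra.antipode (R := k) (A := H))
            (r.left i) * HopfAlgebra.antipode (R := k) (r.right i)
          = HopfAlgebra.antipode (R := k)
              (HopfAlgebra.antipode (R := k) (r.left i) * r.right i) := by
      intro i _
      rw [antipode_mul, hcomm]
      rfl
    rw [Finset.sum_congr rfl e1, ← map_sum, HopfAlgebra.sum_antipode_mul_eq_algebraMap_counit r]
    simp [cu, Algebra.algebraMap_eq_smul_one, antipode_one]
  have h4 := cv_unique h3 cv_antipode_id
  have h5 := LinearMap.congr_fun h4 x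
  simpa using h5

end Hopf
end StmtAux

/-- Let `H` be a Hopf algebra over a field `k` with bijective antipode `S` and
`τ` a Hopf algebra automorphism of `H` of finite order `r`, and suppose
`d_τ = r·exp_τ(H) ≤ 2`.  Then `H` is commutative and cocommutative, and `τ` is either the
identity map or the antipode `S`. -/
theorem stmt3 {k H : Type*} [Field k] [Ring H] [HopfAlgebra k H]
    (hS : Function.Bijective (HopfAlgebra.antipode (R := k) (A := H)))
    (τ : H ≃ₐc[k] H) (r : ℕ) (hr : HasOrder H (⇑τ) r)
    (e : ℕ)
    (he : IsLeast {n : ℕ | 0 < n ∧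
      gamma k H (twist k H hS (τ : H →ₗ[k] H)) (n * r) = convOne k H} e)
    (hd : r * e ≤ 2) :
    (∀ a b : H, a * b = b * a) ∧
    (∀ h : H, TensorProduct.comm k H H (Coalgebra.comul (R := k) h) = Coalgebra.comul h) ∧
    ((∀ h : H, τ h = h) ∨ ∀ h : H, τ h = HopfAlgebra.antipode (R := k) h) := by
  classical
  obtain ⟨⟨he0, heq⟩, -⟩ := he
  have hr0 : 0 < r := hr.1
  have hτiter : (⇑τ)^[r] = id := hr.2.1
  set Si : H →ₗ[k] H := antipodeInv k H hS with hSidef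
  set T : H →ₗ[k] H := twist k H hS (τ : H →ₗ[k] H) with hTdef
  have hτl : ∀ x : H, (τ : H →ₗ[k] H) x = τ x := fun x => rfl
  have hTpt : ∀ x : H, T x = Si (Si (τ x)) := fun x => rfl
  have hSiS : ∀ y : H, HopfAlgebra.antipode (R := k) (Si y) = y := by
    intro y
    have h := (LinearEquiv.ofBijective (HopfAlgebra.antipode (R := k) (A := H))
      hS).apply_symm_apply y
    rwa [LinearEquiv.ofBijective_apply] at h
  have hg1 : gamma k H T 1 = LinearMap.id := by
    have h0 : gamma k H T 1 = conv k H (convOne k H) (T ^ 0) := rfl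
    rw [h0, pow_zero, Module.End.one_eq_id]
    exact StmtAux.cv_one_left LinearMap.id
  have hg2 : gamma k H T 2 = StmtAux.cv LinearMap.id T := by
    have h0 : gamma k H T 2 = conv k H (gamma k H T 1) (T ^ 1) := rfl
    rw [h0, hg1, pow_one]
    rfl
  have he2 : e ≤ 2 := by
    calc e = 1 * e := (one_mul e).symm
      _ ≤ r * e := Nat.mul_le_mul_right e hr0
      _ ≤ 2 := hd
  have hr2 : r ≤ 2 := by
    calc r = r * 1 := (mul_one r).symm
      _ ≤ r * e := Nat.mul_le_mul_left r he0
      _ ≤ 2 := hd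
  have hcases : (r = 1 ∧ e = 1) ∨ (r = 1 ∧ e = 2) ∨ (r = 2 ∧ e = 1) := by
    interval_cases r <;> interval_cases e <;> omega
  rcases hcases with ⟨hrv, hev⟩ | ⟨hrv, hev⟩ | ⟨hrv, hev⟩
  · -- r = 1, e = 1 : trivial Hopf algebra
    subst hrv; subst hev
    have hgam : gamma k H T 1 = convOne k H := by simpa using heq
    have hid : (LinearMap.id : H →ₗ[k] H) = StmtAux.cu := by
      rw [← hg1]; exact hgam
    have hpt1 : ∀ x : H, x = algebraMap k H (Coalgebra.counit (R := k) x) := by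
      intro x
      have h := LinearMap.congr_fun hid x
      simpa [StmtAux.cu] using h
    have hτid : ⇑τ = id := by simpa using hτiter
    refine ⟨?_, ?_, Or.inl fun h => congrFun hτid h⟩
    · intro a b
      rw [hpt1 a]
      exact Algebra.commutes _ _
    · intro h
      rw [hpt1 h, Bialgebra.comul_algebraMap]
      simp [Algebra.TensorProduct.algebraMap_apply, Algebra.algebraMap_eq_smul_one,
        TensorProduct.smul_tmul, Algebra.TensorProduct.one_def]
  · -- r = 1, e = 2 : S³ = id
    subst hrv; subst hev
    have hτid : ⇑τ = id := by simpa using hτiter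
    have hgam : gamma k H T 2 = convOne k H := by simpa using heq
    have hidT : StmtAux.cv LinearMap.id T = StmtAux.cu := by rw [← hg2]; exact hgam
    have hST : HopfAlgebra.antipode (R := k) (A := H) = T :=
      StmtAux.cv_unique StmtAux.cv_antipode_id hidT
    have hpt : ∀ x : H, HopfAlgebra.antipode (R := k) x = Si (Si x) := by
      intro x
      have h := LinearMap.congr_fun hST x
      rw [hTpt x, congrFun hτid x] at h
      exact h
    have h2' : ∀ x : H,
        HopfAlgebra.antipode (R := k) (HopfAlgebra.antipode (R := k) x) = Si x :=
      fun x => by rw [hpt x, hSiS]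
    have h3 : ∀ x : H, HopfAlgebra.antipode (R := k)
        (HopfAlgebra.antipode (R := k) (HopfAlgebra.antipode (R := k) x)) = x :=
      fun x => by rw [h2' x, hSiS]
    have hcomm : ∀ a b : H, a * b = b * a := by
      intro a b
      calc a * b = HopfAlgebra.antipode (R := k) (HopfAlgebra.antipode (R := k)
            (HopfAlgebra.antipode (R := k) (a * b))) := (h3 _).symm
        _ = b * a := by
            rw [StmtAux.antipode_mul, StmtAux.antipode_mul, StmtAux.antipode_mul, h3, h3]
    refine ⟨hcomm, ?_, Or.inl fun h => congrFun hτid h⟩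
    intro h
    have hM3 : ∀ z : H ⊗[k] H,
        TensorProduct.map (HopfAlgebra.antipode (R := k) (A := H))
            (HopfAlgebra.antipode (R := k) (A := H))
          (TensorProduct.map (HopfAlgebra.antipode (R := k) (A := H))
            (HopfAlgebra.antipode (R := k) (A := H))
            (TensorProduct.map (HopfAlgebra.antipode (R := k) (A := H))
              (HopfAlgebra.antipode (R := k) (A := H)) z)) = z := by
      intro z
      induction z using TensorProduct.induction_on with
      | zero => simp
      | tmul p q => simp [h3]
      | add u v hu hv => rw [map_add, map_add, map_add, hu, hv]
    have key : Coalgebra.comul (R := k) h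
        = TensorProduct.comm k H H (Coalgebra.comul (R := k) h) := by
      calc Coalgebra.comul (R := k) h
          = Coalgebra.comul (R := k) (HopfAlgebra.antipode (R := k)
              (HopfAlgebra.antipode (R := k) (HopfAlgebra.antipode (R := k) h))) := by
            rw [h3]
        _ = TensorProduct.comm k H H (TensorProduct.map
              (HopfAlgebra.antipode (R := k) (A := H)) (HopfAlgebra.antipode (R := k) (A := H))
              (Coalgebra.comul (R := k) (HopfAlgebra.antipode (R := k)
                (HopfAlgebra.antipode (R := k) h)))) := StmtAux.antipode_comul _
        _ = TensorProduct.comm k H H (TensorProduct.map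
              (HopfAlgebra.antipode (R := k) (A := H)) (HopfAlgebra.antipode (R := k) (A := H))
              (TensorProduct.comm k H H (TensorProduct.map
                (HopfAlgebra.antipode (R := k) (A := H))
                (HopfAlgebra.antipode (R := k) (A := H))
                (Coalgebra.comul (R := k) (HopfAlgebra.antipode (R := k) h))))) := by
            rw [StmtAux.antipode_comul]
        _ = TensorProduct.comm k H H (TensorProduct.map
              (HopfAlgebra.antipode (R := k) (A := H)) (HopfAlgebra.antipode (R := k) (A := H))
              (TensorProduct.comm k H H (TensorProduct.map
                (HopfAlgebra.antipode (R := k) (A := H))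
                (HopfAlgebra.antipode (R := k) (A := H))
                (TensorProduct.comm k H H (TensorProduct.map
                  (HopfAlgebra.antipode (R := k) (A := H))
                  (HopfAlgebra.antipode (R := k) (A := H))
                  (Coalgebra.comul (R := k) h)))))) := by
            rw [StmtAux.antipode_comul]
        _ = TensorProduct.comm k H H (Coalgebra.comul (R := k) h) := by
            rw [StmtAux.mapSS_comm, StmtAux.comm_comm, StmtAux.mapSS_comm, StmtAux.mapSS_comm, hM3]
    exact key.symm
  · -- r = 2, e = 1 : τ = S
    subst hrv; subst hev
    have hgam : gamma k H T 2 = convOne k H := by simpa using heq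
    have hidT : StmtAux.cv LinearMap.id T = StmtAux.cu := by rw [← hg2]; exact hgam
    have hST : HopfAlgebra.antipode (R := k) (A := H) = T :=
      StmtAux.cv_unique StmtAux.cv_antipode_id hidT
    have hpt : ∀ x : H, HopfAlgebra.antipode (R := k) x = Si (Si (τ x)) := by
      intro x
      have h := LinearMap.congr_fun hST x
      rw [hTpt x] at h
      exact h
    have h2' : ∀ x : H, HopfAlgebra.antipode (R := k)
        (HopfAlgebra.antipode (R := k) x) = Si (τ x) :=
      fun x => by rw [hpt x, hSiS]
    have h3 : ∀ x : H, HopfAlgebra.antipode (R := k) (HopfAlgebra.antipode (R := k)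
        (HopfAlgebra.antipode (R := k) x)) = τ x :=
      fun x => by rw [h2' x, hSiS]
    have hτmul : ∀ x y : H, τ (x * y) = τ y * τ x := by
      intro x y
      rw [← h3 (x * y)]
      rw [StmtAux.antipode_mul, StmtAux.antipode_mul, StmtAux.antipode_mul, h3, h3]
    have hcomm : ∀ a b : H, a * b = b * a := by
      intro a b
      obtain ⟨x, rfl⟩ : ∃ x, τ x = a := ⟨τ.symm a, τ.apply_symm_apply a⟩
      obtain ⟨y, rfl⟩ : ∃ y, τ y = b := ⟨τ.symm b, τ.apply_symm_apply b⟩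
      rw [← map_mul, hτmul x y]
    have hS2 := StmtAux.antipode_sq_of_comm (k := k) (H := H) hcomm
    have hτS : ∀ x : H, τ x = HopfAlgebra.antipode (R := k) x := by
      intro x
      rw [← h3 x]
      exact hS2 (HopfAlgebra.antipode (R := k) x)
    refine ⟨hcomm, ?_, Or.inr fun h => hτS h⟩
    intro h
    have hkey : ∀ (u : H →ₗ[k] H), (∀ x, u x = τ x) →
        TensorProduct.map u u = TensorProduct.map
          (HopfAlgebra.antipode (R := k) (A := H)) (HopfAlgebra.antipode (R := k) (A := H)) := by
      intro u huu
      have : u = HopfAlgebra.antipode (R := k) (A := H) :=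
        LinearMap.ext fun x => by rw [huu x, hτS x]
      rw [this]
    have hcc := CoalgHomClass.map_comp_comul_apply (F := H ≃ₐc[k] H) τ h
    have hccc : TensorProduct.map (HopfAlgebra.antipode (R := k) (A := H))
        (HopfAlgebra.antipode (R := k) (A := H)) (Coalgebra.comul (R := k) h)
          = Coalgebra.comul (R := k) (HopfAlgebra.antipode (R := k) h) := by
      rw [← hτS h, ← hcc]
      exact (LinearMap.congr_fun (hkey _ (fun x => rfl)) _).symm
    have hfix : TensorProduct.map (HopfAlgebra.antipode (R := k) (A := H))
          (HopfAlgebra.antipode (R := k) (A := H)) (Coalgebra.comul (R := k) h)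
        = TensorProduct.map (HopfAlgebra.antipode (R := k) (A := H))
          (HopfAlgebra.antipode (R := k) (A := H))
            (TensorProduct.comm k H H (Coalgebra.comul (R := k) h)) := by
      calc TensorProduct.map (HopfAlgebra.antipode (R := k) (A := H))
            (HopfAlgebra.antipode (R := k) (A := H)) (Coalgebra.comul (R := k) h)
          = Coalgebra.comul (R := k) (HopfAlgebra.antipode (R := k) h) := hccc
        _ = TensorProduct.comm k H H (TensorProduct.map (HopfAlgebra.antipode (R := k) (A := H))
            (HopfAlgebra.antipode (R := k) (A := H)) (Coalgebra.comul (R := k) h)) :=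
          StmtAux.antipode_comul h
        _ = TensorProduct.map (HopfAlgebra.antipode (R := k) (A := H))
            (HopfAlgebra.antipode (R := k) (A := H))
              (TensorProduct.comm k H H (Coalgebra.comul (R := k) h)) :=
          (StmtAux.mapSS_comm _).symm
    set eS := LinearEquiv.ofBijective (HopfAlgebra.antipode (R := k) (A := H)) hS with heS
    have hcongr : ∀ z : H ⊗[k] H, TensorProduct.map
        (HopfAlgebra.antipode (R := k) (A := H)) (HopfAlgebra.antipode (R := k) (A := H)) z
          = TensorProduct.congr eS eS z := by
      intro z
      induction z using TensorProduct.induction_on with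
      | zero => simp
      | tmul p q => simp [heS, LinearEquiv.ofBijective_apply]
      | add u v hu hv => rw [map_add, map_add, hu, hv]
    have hinj := (TensorProduct.congr eS eS).injective
    have : TensorProduct.congr eS eS (Coalgebra.comul (R := k) h)
        = TensorProduct.congr eS eS (TensorProduct.comm k H H (Coalgebra.comul (R := k) h)) := by
      rw [← hcongr, ← hcongr]
      exact hfix
    exact (hinj this).symm
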